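/- Let N = N(Q_n, m, r) be a quasi Q_n-filiform Lie algebra. Then there exists a derivation h_1 of N such that h_1 e_{i0} = -2i·e_{i0} and h_1 e_{i1} = i(n-2)·e_{i1} for all 1 ≤ i ≤ m. -/

import Mathlib

open Finset

/-- A quasi `Qₙ`-filiform Lie algebra `N = N(Qₙ, m, r)`: a finite-dimensional complex
nilpotent Lie algebra which is the sum of `m` pairwise commuting subalgebras, each
isomorphic to the filiform Lie algebra `Qₙ` with basis `e i 0, …, e i n` satisfying the
`Qₙ` bracket relations, and such that
`{e 1 0, …, e 1 (n-1), …, e m 0, …, e m (n-1), e 1 n, …, e r n}` is a basis of `N`,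
where `r = dim c^{n-1} N`. -/
structure QuasiQnFiliform (n m r : ℕ) (N : Type*) [LieRing N] [LieAlgebra ℂ N] : Type _ where
  /-- the distinguished vectors `e_{ij}`, for `1 ≤ i ≤ m`, `0 ≤ j ≤ n` -/
  e : ℕ → ℕ → N
  /-- `N` is nilpotent -/
  nilpotent : LieRing.IsNilpotent N
  /-- `N` is finite-dimensional -/
  findim : FiniteDimensional ℂ N
  /-- `[e_{i0}, e_{ij}] = e_{i,j+1}` for `1 ≤ j ≤ n - 2` -/
  bracket_e0 : ∀ i j, 1 ≤ i → i ≤ m → 1 ≤ j → j ≤ n - 2 → ⁅e i 0, e i j⁆ = e i (j + 1)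
  /-- `[e_{i0}, e_{i,n-1}] = 0` -/
  bracket_e0_top : ∀ i, 1 ≤ i → i ≤ m → ⁅e i 0, e i (n - 1)⁆ = 0
  /-- `[e_{i0}, e_{in}] = 0` -/
  bracket_e0_n : ∀ i, 1 ≤ i → i ≤ m → ⁅e i 0, e i n⁆ = 0
  /-- `[e_{ij}, e_{i,n-j}] = (-1)^j e_{in}` for `1 ≤ j ≤ n - 1` -/
  bracket_pair : ∀ i j, 1 ≤ i → i ≤ m → 1 ≤ j → j ≤ n - 1 →
    ⁅e i j, e i (n - j)⁆ = ((-1 : ℂ)) ^ j • e i n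
  /-- all remaining brackets inside a component vanish -/
  bracket_zero : ∀ i j k, 1 ≤ i → i ≤ m → 1 ≤ j → j ≤ n → 1 ≤ k → k ≤ n → j + k ≠ n →
    ⁅e i j, e i k⁆ = 0
  /-- distinct components commute: `[N_i, N_{i'}] = 0` -/
  bracket_comm : ∀ i i' j j', 1 ≤ i → i ≤ m → 1 ≤ i' → i' ≤ m → i ≠ i' → j ≤ n → j' ≤ n →
    ⁅e i j, e i' j'⁆ = 0
  /-- `{e_{i0}, …, e_{in}}` is linearly independent (each `Nᵢ ≅ Qₙ` has it as a basis) -/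
  indep_comp : ∀ i, 1 ≤ i → i ≤ m → LinearIndependent ℂ (fun j : Fin (n + 1) => e i (j : ℕ))
  /-- the distinguished family is linearly independent … -/
  basis_indep : LinearIndependent ℂ
    (Sum.elim (fun p : Fin m × Fin n => e ((p.1 : ℕ) + 1) (p.2 : ℕ))
      (fun t : Fin r => e ((t : ℕ) + 1) n))
  /-- … and spans `N`, i.e. it is a basis of `N` (in particular `N = N₁ + ⋯ + N_m`) -/
  basis_span : Submodule.span ℂ (Set.range
    (Sum.elim (fun p : Fin m × Fin n => e ((p.1 : ℕ) + 1) (p.2 : ℕ))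
      (fun t : Fin r => e ((t : ℕ) + 1) n))) = ⊤
  /-- `r = dim c^{n-1} N` -/
  rank_lcs : Module.finrank ℂ (LieModule.lowerCentralSeries ℂ N N (n - 1)) = r

namespace QQFAux

variable {n m r : ℕ} {N : Type*} [LieRing N] [LieAlgebra ℂ N]

/-- Eigenvalue function: `ν i j = 0` if `j = n`, `-2i` if `j = 0`, else `i(n-2j)`. -/
noncomputable def nu (n i j : ℕ) : ℂ :=
  if j = n then 0 else if j = 0 then -(2 * (i : ℂ)) else (i : ℂ) * ((n : ℂ) - 2 * (j : ℂ))

lemma nu_n (n i : ℕ) : nu n i n = 0 := by unfold nu; rw [if_pos rfl]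

lemma nu_zero {n : ℕ} (hn : 1 ≤ n) (i : ℕ) : nu n i 0 = -(2 * (i : ℂ)) := by
  unfold nu; rw [if_neg (by omega), if_pos rfl]

lemma nu_pos {n j : ℕ} (h1 : 1 ≤ j) (h2 : j ≤ n - 1) (hn : 1 ≤ n) (i : ℕ) :
    nu n i j = (i : ℂ) * ((n : ℂ) - 2 * (j : ℂ)) := by
  unfold nu; rw [if_neg (by omega), if_neg (by omega)]

/-- The distinguished basis family of a quasi `Qₙ`-filiform Lie algebra. -/
def fam (Q : QuasiQnFiliform n m r N) : (Fin m × Fin n) ⊕ Fin r → N :=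
  Sum.elim (fun p : Fin m × Fin n => Q.e ((p.1 : ℕ) + 1) (p.2 : ℕ))
    (fun t : Fin r => Q.e ((t : ℕ) + 1) n)

/-- The eigenvalues attached to the basis family. -/
noncomputable def lam (n m r : ℕ) : (Fin m × Fin n) ⊕ Fin r → ℂ :=
  Sum.elim (fun p : Fin m × Fin n => nu n ((p.1 : ℕ) + 1) (p.2 : ℕ)) (fun _ => 0)

/-- The distinguished family as a basis. -/
noncomputable def bas (Q : QuasiQnFiliform n m r N) :
    Module.Basis ((Fin m × Fin n) ⊕ Fin r) ℂ N :=
  Module.Basis.mk Q.basis_indep Q.basis_span.ge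

/-- The diagonal linear map. -/
noncomputable def hmap (Q : QuasiQnFiliform n m r N) : N →ₗ[ℂ] N :=
  (bas Q).constr ℂ (fun a => lam n m r a • fam Q a)

lemma hmap_fam (Q : QuasiQnFiliform n m r N) (a : (Fin m × Fin n) ⊕ Fin r) :
    hmap Q (fam Q a) = lam n m r a • fam Q a := by
  have h1 : bas Q a = fam Q a := Module.Basis.mk_apply _ _ a
  conv_lhs => rw [← h1]
  exact (bas Q).constr_basis ℂ (fun a => lam n m r a • fam Q a) a

lemma bas_apply (Q : QuasiQnFiliform n m r N) (a : (Fin m × Fin n) ⊕ Fin r) :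
    bas Q a = fam Q a := Module.Basis.mk_apply _ _ a

lemma hmap_e (Q : QuasiQnFiliform n m r N) {i j : ℕ} (h1 : 1 ≤ i) (h2 : i ≤ m)
    (h3 : j < n) : hmap Q (Q.e i j) = nu n i j • Q.e i j := by
  have key : hmap Q (Q.e (i - 1 + 1) j) = nu n (i - 1 + 1) j • Q.e (i - 1 + 1) j :=
    hmap_fam Q (Sum.inl (⟨i - 1, by omega⟩, ⟨j, h3⟩))
  rwa [show i - 1 + 1 = i from by omega] at key

lemma hmap_en_fin (Q : QuasiQnFiliform n m r N) (t : Fin r) :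
    hmap Q (Q.e ((t : ℕ) + 1) n) = 0 := by
  have key : hmap Q (Q.e ((t : ℕ) + 1) n) = (0 : ℂ) • Q.e ((t : ℕ) + 1) n :=
    hmap_fam Q (Sum.inr t)
  simpa using key

lemma aux0 (Q : QuasiQnFiliform n m r N) (hn5 : 5 ≤ n) :
    ∀ i j', 1 ≤ i → i ≤ m → j' ≤ n →
      hmap Q ⁅Q.e i 0, Q.e i j'⁆ = (nu n i 0 + nu n i j') • ⁅Q.e i 0, Q.e i j'⁆ := by
  intro i j' h1 h2 h3
  rcases Nat.eq_zero_or_pos j' with rfl | hpos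
  · simp
  by_cases hj'n : j' = n
  · subst hj'n; rw [Q.bracket_e0_n i h1 h2]; simp
  by_cases hj'top : j' = n - 1
  · rw [hj'top, Q.bracket_e0_top i h1 h2]; simp
  · have hle : j' ≤ n - 2 := by omega
    rw [Q.bracket_e0 i j' h1 h2 hpos hle, hmap_e Q h1 h2 (show j' + 1 < n by omega)]
    congr 1
    rw [nu_zero (by omega) i, nu_pos hpos (by omega) (by omega) i,
      nu_pos (by omega) (by omega : j' + 1 ≤ n - 1) (by omega) i]
    push_cast
    ring

lemma main (Q : QuasiQnFiliform n m r N) (hn5 : 5 ≤ n)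
    (hen : ∀ i, 1 ≤ i → i ≤ m → hmap Q (Q.e i n) = 0) :
    ∀ i j i' j', 1 ≤ i → i ≤ m → 1 ≤ i' → i' ≤ m → j ≤ n → j' ≤ n →
      hmap Q ⁅Q.e i j, Q.e i' j'⁆ = (nu n i j + nu n i' j') • ⁅Q.e i j, Q.e i' j'⁆ := by
  intro i j i' j' h1 h2 h1' h2' h3 h3'
  by_cases hii : i = i'
  · subst hii
    rcases Nat.eq_zero_or_pos j with rfl | hj
    · exact aux0 Q hn5 i j' h1 h2 h3'
    rcases Nat.eq_zero_or_pos j' with rfl | hj'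
    · have hprev := aux0 Q hn5 i j h1 h2 h3
      have hskew : ⁅Q.e i j, Q.e i 0⁆ = -⁅Q.e i 0, Q.e i j⁆ := (lie_skew _ _).symm
      rw [hskew, map_neg, hprev, smul_neg, add_comm]
    by_cases hsum : j + j' = n
    · have hj'eq : j' = n - j := by omega
      have hz : nu n i j + nu n i j' = 0 := by
        rw [nu_pos hj (by omega) (by omega) i, nu_pos hj' (by omega) (by omega) i]
        have hc : (j : ℂ) + (j' : ℂ) = (n : ℂ) := by exact_mod_cast congrArg Nat.cast hsum
        linear_combination (-2 * (i : ℂ)) * hc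
      rw [hz, zero_smul, hj'eq, Q.bracket_pair i j h1 h2 hj (by omega), map_smul,
        hen i h1 h2, smul_zero]
    · rw [Q.bracket_zero i j j' h1 h2 hj h3 hj' h3' hsum]; simp
  · rw [Q.bracket_comm i i' j j' h1 h2 h1' h2' hii h3 h3']; simp

end QQFAux


/-- Every quasi `Qₙ`-filiform Lie algebra `N = N(Qₙ, m, r)` admits a derivation `h₁`
with `h₁ e_{i0} = -2i·e_{i0}` and `h₁ e_{i1} = i(n-2)·e_{i1}` for all `1 ≤ i ≤ m`. -/
theorem exists_diagonal_derivation
    (n d m r : ℕ) (hn : n = 2 * d + 1) (hd : 2 ≤ d)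
    (hm : 1 ≤ m) (hr : 1 ≤ r) (hrm : r ≤ m)
    (N : Type*) [LieRing N] [LieAlgebra ℂ N] (Q : QuasiQnFiliform n m r N) :
    ∃ h₁ : LieDerivation ℂ N N, ∀ i, 1 ≤ i → i ≤ m →
      h₁ (Q.e i 0) = (-(2 * (i : ℂ))) • Q.e i 0 ∧
      h₁ (Q.e i 1) = (((i * (n - 2) : ℕ) : ℂ)) • Q.e i 1 := by
  classical
  haveI := Q.findim
  have hn5 : 5 ≤ n := by omega
  have hmem : ∀ i, 1 ≤ i → i ≤ m → ∀ k, k + 1 ≤ n - 1 →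
      Q.e i (k + 1) ∈ LieModule.lowerCentralSeries ℂ N N k := by
    intro i h1 h2 k
    induction k with
    | zero => intro _; rw [LieModule.lowerCentralSeries_zero]; exact LieSubmodule.mem_top _
    | succ k ih =>
      intro hk
      rw [LieModule.lowerCentralSeries_succ]
      have hb : Q.e i (k + 1 + 1) = ⁅Q.e i 0, Q.e i (k + 1)⁆ :=
        (Q.bracket_e0 i (k + 1) h1 h2 (by omega) (by omega)).symm
      rw [hb]
      exact LieSubmodule.lie_mem_lie (LieSubmodule.mem_top _) (ih (by omega))
  have hein_mem : ∀ i, 1 ≤ i → i ≤ m →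
      Q.e i n ∈ LieModule.lowerCentralSeries ℂ N N (n - 1) := by
    intro i h1 h2
    have hp := Q.bracket_pair i 1 h1 h2 le_rfl (by omega)
    have hne : Q.e i n = -⁅Q.e i 1, Q.e i (n - 1)⁆ := by
      rw [hp]; simp
    have hmem2 := hmem i h1 h2 (n - 2) (by omega)
    rw [hne, show n - 1 = n - 2 + 1 from by omega, LieModule.lowerCentralSeries_succ]
    exact neg_mem (LieSubmodule.lie_mem_lie (LieSubmodule.mem_top _) hmem2)
  set S : Submodule ℂ N :=
    Submodule.span ℂ (Set.range fun t : Fin r => Q.e ((t : ℕ) + 1) n) with hS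
  have hli : LinearIndependent ℂ (fun t : Fin r => Q.e ((t : ℕ) + 1) n) := by
    have := Q.basis_indep.comp Sum.inr Sum.inr_injective
    simpa using this
  have hfr : Module.finrank ℂ S = r := by
    rw [hS, finrank_span_eq_card hli, Fintype.card_fin]
  have hle : S ≤ (LieModule.lowerCentralSeries ℂ N N (n - 1) : Submodule ℂ N) := by
    rw [hS, Submodule.span_le]
    rintro x ⟨t, rfl⟩
    exact (LieSubmodule.mem_toSubmodule _).mpr
      (hein_mem _ (Nat.le_add_left 1 _) (le_trans t.isLt hrm))
  have hSeq : S = (LieModule.lowerCentralSeries ℂ N N (n - 1) : Submodule ℂ N) :=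
    Submodule.eq_of_le_of_finrank_eq hle (by rw [hfr]; exact Q.rank_lcs.symm)
  have hen : ∀ i, 1 ≤ i → i ≤ m → QQFAux.hmap Q (Q.e i n) = 0 := by
    intro i h1 h2
    have hmemS : Q.e i n ∈ S := by
      rw [hSeq]; exact (LieSubmodule.mem_toSubmodule _).mpr (hein_mem i h1 h2)
    have hker : S ≤ LinearMap.ker (QQFAux.hmap Q) := by
      rw [hS, Submodule.span_le]
      rintro x ⟨t, rfl⟩
      simpa [LinearMap.mem_ker] using QQFAux.hmap_en_fin Q t
    simpa [LinearMap.mem_ker] using hker hmemS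
  have hbr := QQFAux.main Q hn5 hen
  let L1 : N →ₗ[ℂ] N →ₗ[ℂ] N := LinearMap.mk₂ ℂ (fun x y => QQFAux.hmap Q ⁅x, y⁆)
    (fun x x' y => by simp only [add_lie, map_add]) (fun c x y => by simp only [smul_lie, map_smul])
    (fun x y y' => by simp only [lie_add, map_add]) (fun c x y => by simp only [lie_smul, map_smul])
  let L2 : N →ₗ[ℂ] N →ₗ[ℂ] N := LinearMap.mk₂ ℂ
    (fun x y => ⁅QQFAux.hmap Q x, y⁆ + ⁅x, QQFAux.hmap Q y⁆)
    (fun x x' y => by simp only [map_add, add_lie]; abel)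
    (fun c x y => by simp only [map_smul, smul_lie, smul_add])
    (fun x y y' => by simp only [map_add, lie_add]; abel)
    (fun c x y => by simp only [map_smul, lie_smul, smul_add])
  have hL : L1 = L2 := by
    apply LinearMap.ext_basis (QQFAux.bas Q) (QQFAux.bas Q)
    intro a b
    simp only [L1, L2, LinearMap.mk₂_apply, QQFAux.bas_apply, QQFAux.hmap_fam,
      smul_lie, lie_smul]
    rw [← add_smul]
    rcases a with p | t <;> rcases b with q | t' <;>
      simp only [QQFAux.lam, QQFAux.fam, Sum.elim_inl, Sum.elim_inr]
    · exact hbr ((p.1 : ℕ) + 1) (p.2 : ℕ) ((q.1 : ℕ) + 1) (q.2 : ℕ)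
        (Nat.le_add_left 1 _) p.1.isLt (Nat.le_add_left 1 _) q.1.isLt
        (le_of_lt p.2.isLt) (le_of_lt q.2.isLt)
    · have := hbr ((p.1 : ℕ) + 1) (p.2 : ℕ) ((t' : ℕ) + 1) n
        (Nat.le_add_left 1 _) p.1.isLt (Nat.le_add_left 1 _) (le_trans t'.isLt hrm)
        (le_of_lt p.2.isLt) le_rfl
      rwa [QQFAux.nu_n] at this
    · have := hbr ((t : ℕ) + 1) n ((q.1 : ℕ) + 1) (q.2 : ℕ)
        (Nat.le_add_left 1 _) (le_trans t.isLt hrm) (Nat.le_add_left 1 _) q.1.isLt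
        le_rfl (le_of_lt q.2.isLt)
      rwa [QQFAux.nu_n] at this
    · have := hbr ((t : ℕ) + 1) n ((t' : ℕ) + 1) n
        (Nat.le_add_left 1 _) (le_trans t.isLt hrm) (Nat.le_add_left 1 _)
        (le_trans t'.isLt hrm) le_rfl le_rfl
      rwa [QQFAux.nu_n, QQFAux.nu_n] at this
  have leib : ∀ x y : N,
      QQFAux.hmap Q ⁅x, y⁆ = ⁅x, QQFAux.hmap Q y⁆ - ⁅y, QQFAux.hmap Q x⁆ := by
    intro x y
    have h12 := LinearMap.congr_fun (LinearMap.congr_fun hL x) y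
    simp only [L1, L2, LinearMap.mk₂_apply] at h12
    rw [h12, show ⁅QQFAux.hmap Q x, y⁆ = -⁅y, QQFAux.hmap Q x⁆ from (lie_skew _ _).symm]
    abel
  refine ⟨⟨QQFAux.hmap Q, fun a b => leib a b⟩, ?_⟩
  intro i h1 h2
  constructor
  · show QQFAux.hmap Q (Q.e i 0) = _
    rw [QQFAux.hmap_e Q h1 h2 (by omega), QQFAux.nu_zero (by omega)]
  · show QQFAux.hmap Q (Q.e i 1) = _
    rw [QQFAux.hmap_e Q h1 h2 (by omega),
      QQFAux.nu_pos le_rfl (by omega) (by omega)]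
    congr 1
    push_cast [Nat.cast_sub (show 2 ≤ n by omega)]
    ring
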